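/- Let p be a prime with 4 dividing p−1, let λ be an element of order 4 in (ℤ/pℤ)ˣ, and let k ∈ ℤ/pℤ. Then the assignment a ↦ b, b ↦ a^λ b^{λ−1} c^k, c ↦ c^{−λ} extends to an automorphism α of G_2(p) of order 4, and α permutes the four elements of R_{4,k} cyclically: α(a) = b, α(b) = a^λ b^{λ−1} c^k, α(a^λ b^{λ−1} c^k) = a^{−λ−1} b^{−λ} c^{1−k}, and α(a^{−λ−1} b^{−λ} c^{1−k}) = a. -/

import Mathlib

/-- The Cayley graph of a group `G` with respect to a subset `S`:
vertices are the elements of `G`, and `x`, `y` are adjacent iff `y * x⁻¹ ∈ S`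
(symmetrized; when `S = S⁻¹` and `1 ∉ S` this is the usual Cayley graph). -/
def Cay (G : Type*) [Group G] (S : Set G) : SimpleGraph G where
  Adj x y := x ≠ y ∧ (y * x⁻¹ ∈ S ∨ x * y⁻¹ ∈ S)
  symm := ⟨fun x y h => ⟨h.1.symm, h.2.symm⟩⟩
  loopless := ⟨fun x h => h.1 rfl⟩

namespace SimpleGraph
variable {V : Type*} (Γ : SimpleGraph V)

/-- The automorphism group acts transitively on vertices. -/
def VertexTransitive : Prop := ∀ u v : V, ∃ f : Γ ≃g Γ, f u = v

/-- The automorphism group acts transitively on (undirected) edges. -/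
def EdgeTransitive : Prop :=
  ∀ e₁ ∈ Γ.edgeSet, ∀ e₂ ∈ Γ.edgeSet, ∃ f : Γ ≃g Γ, Sym2.map f e₁ = e₂

/-- The automorphism group acts transitively on arcs (ordered pairs of adjacent vertices). -/
def ArcTransitive : Prop :=
  ∀ u v x y : V, Γ.Adj u v → Γ.Adj x y → ∃ f : Γ ≃g Γ, f u = x ∧ f v = y

/-- A graph is half-arc-transitive if it is vertex- and edge- but not arc-transitive. -/
def HalfArcTransitive : Prop :=
  Γ.VertexTransitive ∧ Γ.EdgeTransitive ∧ ¬ Γ.ArcTransitive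

end SimpleGraph

/-- The right regular representation `Ĝ = {x ↦ x * g | g ∈ G}` as a subgroup of the
automorphism group of the Cayley graph `Cay G S`. -/
def rightRegular (G : Type*) [Group G] (S : Set G) :
    Subgroup ((Cay G S) ≃g (Cay G S)) where
  carrier := {f | ∃ g : G, ∀ x, f x = x * g}
  one_mem' := ⟨1, fun x => (mul_one x).symm⟩
  mul_mem' := by
    rintro f f' ⟨g, hg⟩ ⟨g', hg'⟩
    exact ⟨g' * g, fun x => by
      show f (f' x) = x * (g' * g)
      rw [hg', hg, mul_assoc]⟩
  inv_mem' := by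
    rintro f ⟨g, hg⟩
    refine ⟨g⁻¹, fun x => ?_⟩
    show f.symm x = x * g⁻¹
    have h1 : f (x * g⁻¹) = x := by rw [hg, inv_mul_cancel_right]
    have h2 : f.symm (f (x * g⁻¹)) = x * g⁻¹ := RelIso.symm_apply_apply f _
    rw [h1] at h2
    exact h2

/-- A Cayley graph is *normal* if the right regular representation is a normal subgroup
of its full automorphism group. -/
def CayleyNormal (G : Type*) [Group G] (S : Set G) : Prop :=
  (rightRegular G S).Normal

/-- `Aut(G, S)`: the group of automorphisms of `G` preserving the subset `S` setwise. -/
def autStab (G : Type*) [Group G] (S : Set G) : Subgroup (MulAut G) where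
  carrier := {α | α '' S = S}
  one_mem' := by simp
  mul_mem' := by
    intro α β hα hβ
    show (α * β) '' S = S
    have : ⇑(α * β) = ⇑α ∘ ⇑β := rfl
    rw [this, Set.image_comp, hβ, hα]
  inv_mem' := by
    intro α hα
    show ⇑α⁻¹ '' S = S
    conv_lhs => rw [← hα]
    rw [← Set.image_comp]
    have : ⇑α⁻¹ ∘ ⇑α = id := by
      funext x
      exact α.symm_apply_apply x
    rw [this, Set.image_id]

/-- The setoid on an index set identifying indices with isomorphic graphs. -/
def graphIsoSetoid {ι V : Type*} (F : ι → SimpleGraph V) : Setoid ι where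
  r k l := Nonempty (F k ≃g F l)
  iseqv := ⟨fun _ => ⟨RelIso.refl _⟩, fun ⟨f⟩ => ⟨f.symm⟩, fun ⟨f⟩ ⟨g⟩ => ⟨f.trans g⟩⟩
/-- Relations for the group `G₁(p) = ⟨a, b | a^(p²) = 1, b^p = 1, b⁻¹ a b = a^(1+p)⟩`. -/
def G1Rels (p : ℕ) : Set (FreeGroup (Fin 2)) :=
  {FreeGroup.of 0 ^ (p ^ 2), FreeGroup.of 1 ^ p,
    (FreeGroup.of 1)⁻¹ * FreeGroup.of 0 * FreeGroup.of 1 * (FreeGroup.of 0 ^ (1 + p))⁻¹}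

/-- The nonabelian metacyclic group of order `p³`. -/
abbrev G1 (p : ℕ) : Type := PresentedGroup (G1Rels p)

/-- The generator `a` of `G₁(p)`. -/
def a1 (p : ℕ) : G1 p := PresentedGroup.of 0

/-- The generator `b` of `G₁(p)`. -/
def b1 (p : ℕ) : G1 p := PresentedGroup.of 1

/-- The connection set `T^{j,k} = {b^k a^(e^i), (b^k a^(e^i))⁻¹ : 0 ≤ i ≤ j-1} ⊆ G₁(p)`,
where `e` is a unit of `ℤ/p²ℤ` (of order `j`). -/
def Tset (p : ℕ) (e : (ZMod (p ^ 2))ˣ) (j k : ℕ) : Set (G1 p) :=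
  ((fun i : ℕ => b1 p ^ k * a1 p ^ ((e ^ i : (ZMod (p ^ 2))ˣ) : ZMod (p ^ 2)).val) ''
      Set.Iio j) ∪
  ((fun i : ℕ => b1 p ^ k * a1 p ^ ((e ^ i : (ZMod (p ^ 2))ˣ) : ZMod (p ^ 2)).val) ''
      Set.Iio j)⁻¹

open scoped commutatorElement

/-- Relations for the Heisenberg group
`G₂(p) = ⟨a, b, c | a^p = b^p = c^p = 1, [a,b] = c, [a,c] = [b,c] = 1⟩`. -/
def G2Rels (p : ℕ) : Set (FreeGroup (Fin 3)) :=
  {FreeGroup.of 0 ^ p, FreeGroup.of 1 ^ p, FreeGroup.of 2 ^ p,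
    ⁅FreeGroup.of (0 : Fin 3), FreeGroup.of 1⁆ * (FreeGroup.of 2)⁻¹,
    ⁅FreeGroup.of (0 : Fin 3), FreeGroup.of 2⁆, ⁅FreeGroup.of (1 : Fin 3), FreeGroup.of 2⁆}

/-- The nonabelian group of order `p³` and exponent `p`. -/
abbrev G2 (p : ℕ) : Type := PresentedGroup (G2Rels p)

/-- The generator `a` of `G₂(p)`. -/
def a2 (p : ℕ) : G2 p := PresentedGroup.of 0

/-- The generator `b` of `G₂(p)`. -/
def b2 (p : ℕ) : G2 p := PresentedGroup.of 1

/-- The generator `c = [a,b]` of `G₂(p)`. -/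
def c2 (p : ℕ) : G2 p := PresentedGroup.of 2

/-- Power of an element of `G₂(p)` by an exponent in `ℤ/pℤ` (well defined as every
element of `G₂(p)` has order dividing `p`). -/
def pw {p : ℕ} (x : G2 p) (n : ZMod p) : G2 p := x ^ n.val

/-- `R_{4,k} = {a, b, a^λ b^(λ-1) c^k, a^(-λ-1) b^(-λ) c^(1-k)} ⊆ G₂(p)`. -/
def R4 (p : ℕ) (lam k : ZMod p) : Set (G2 p) :=
  {a2 p, b2 p,
    pw (a2 p) lam * pw (b2 p) (lam - 1) * pw (c2 p) k,
    pw (a2 p) (-lam - 1) * pw (b2 p) (-lam) * pw (c2 p) (1 - k)}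

/-- `S_{4,k} = R_{4,k} ∪ R_{4,k}⁻¹ ⊆ G₂(p)`. -/
def S4 (p : ℕ) (lam k : ZMod p) : Set (G2 p) :=
  R4 p lam k ∪ (R4 p lam k)⁻¹

section AuxStatement9

variable {p : ℕ}

lemma g2_rel_one {r : FreeGroup (Fin 3)} (hr : r ∈ G2Rels p) :
    PresentedGroup.mk (G2Rels p) r = 1 :=
  (QuotientGroup.eq_one_iff _).mpr (Subgroup.subset_normalClosure hr)

lemma ha_pow : (a2 p) ^ p = 1 := by
  have := g2_rel_one (p := p) (r := FreeGroup.of 0 ^ p) (by simp [G2Rels])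
  simpa [a2, PresentedGroup.of, map_pow] using this

lemma hb_pow : (b2 p) ^ p = 1 := by
  have := g2_rel_one (p := p) (r := FreeGroup.of 1 ^ p) (by simp [G2Rels])
  simpa [b2, PresentedGroup.of, map_pow] using this

lemma hc_pow : (c2 p) ^ p = 1 := by
  have := g2_rel_one (p := p) (r := FreeGroup.of 2 ^ p) (by simp [G2Rels])
  simpa [c2, PresentedGroup.of, map_pow] using this

lemma hab_comm : ⁅a2 p, b2 p⁆ = c2 p := by
  have := g2_rel_one (p := p)
    (r := ⁅FreeGroup.of (0 : Fin 3), FreeGroup.of 1⁆ * (FreeGroup.of 2)⁻¹) (by simp [G2Rels])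
  rw [map_mul, map_inv, map_commutatorElement] at this
  exact mul_inv_eq_one.mp this

lemma hac : Commute (a2 p) (c2 p) := by
  have := g2_rel_one (p := p)
    (r := ⁅FreeGroup.of (0 : Fin 3), FreeGroup.of 2⁆) (by simp [G2Rels])
  rw [map_commutatorElement] at this
  exact commutatorElement_eq_one_iff_commute.mp this

lemma hbc : Commute (b2 p) (c2 p) := by
  have := g2_rel_one (p := p)
    (r := ⁅FreeGroup.of (1 : Fin 3), FreeGroup.of 2⁆) (by simp [G2Rels])
  rw [map_commutatorElement] at this
  exact commutatorElement_eq_one_iff_commute.mp this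

lemma c_central (g : G2 p) : Commute (c2 p) g := by
  have hg : g ∈ Subgroup.centralizer {c2 p} := by
    apply PresentedGroup.generated_by
    intro j
    rw [Subgroup.mem_centralizer_iff]
    rintro h rfl
    fin_cases j
    · exact (hac (p := p)).symm.eq
    · exact (hbc (p := p)).symm.eq
    · rfl
  exact (Subgroup.mem_centralizer_iff.mp hg (c2 p) rfl)

section pwcalc
variable [NeZero p]

lemma pow_eq_pw {x : G2 p} (hx : x ^ p = 1) (n : ℕ) : x ^ n = pw x (n : ZMod p) := by
  unfold pw
  apply (pow_eq_pow_iff_modEq).mpr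
  have h1 : n ≡ n % p [MOD p] := (Nat.mod_modEq n p).symm
  rw [ZMod.val_natCast]
  exact (Nat.ModEq.of_dvd (orderOf_dvd_of_pow_eq_one hx) h1)

lemma pw_add {x : G2 p} (hx : x ^ p = 1) (m n : ZMod p) :
    pw x m * pw x n = pw x (m + n) := by
  have : pw x m * pw x n = x ^ (m.val + n.val) := (pow_add x m.val n.val).symm
  rw [this, pow_eq_pw hx]
  push_cast [ZMod.natCast_rightInverse m, ZMod.natCast_rightInverse n]
  rfl

lemma pw_zero (x : G2 p) : pw x 0 = 1 := by
  simp [pw]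

lemma pw_inv {x : G2 p} (hx : x ^ p = 1) (m : ZMod p) : (pw x m)⁻¹ = pw x (-m) := by
  apply inv_eq_of_mul_eq_one_right
  rw [pw_add hx, add_neg_cancel, pw_zero]

lemma pw_pw {x : G2 p} (hx : x ^ p = 1) (m n : ZMod p) :
    pw (pw x m) n = pw x (m * n) := by
  have : pw (pw x m) n = x ^ (m.val * n.val) := (pow_mul x m.val n.val).symm
  rw [this, pow_eq_pw hx]
  push_cast [ZMod.natCast_rightInverse m, ZMod.natCast_rightInverse n]
  rfl

lemma pw_one' (hp : 1 < p) (x : G2 p) : pw x 1 = x := by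
  simp [pw, ZMod.val_one'' (by omega : p ≠ 1)]

end pwcalc

set_option linter.unusedSectionVars false
variable [NeZero p]

/-- normal form -/
def nf (p : ℕ) (i j l : ZMod p) : G2 p := pw (a2 p) i * pw (b2 p) j * pw (c2 p) l

lemma hba : b2 p * a2 p = a2 p * b2 p * (c2 p)⁻¹ := by
  have h := hab_comm (p := p)
  rw [commutatorElement_def] at h
  have h2 : a2 p * b2 p = c2 p * (b2 p * a2 p) := by
    rw [← h]; group
  rw [h2]
  have hc := (c_central (p := p) (b2 p * a2 p)).eq
  rw [hc]; group

lemma hba_pow1 (m : ℕ) : b2 p ^ m * a2 p = a2 p * b2 p ^ m * (c2 p ^ m)⁻¹ := by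
  induction m with
  | zero => simp
  | succ m ih =>
    have hc1 : Commute ((c2 p ^ m)⁻¹) (b2 p) := ((c_central (b2 p)).pow_left m).inv_left
    calc b2 p ^ (m+1) * a2 p = b2 p ^ m * (b2 p * a2 p) := by rw [pow_succ]; group
      _ = b2 p ^ m * (a2 p * b2 p * (c2 p)⁻¹) := by rw [hba]
      _ = (b2 p ^ m * a2 p) * b2 p * (c2 p)⁻¹ := by group
      _ = a2 p * b2 p ^ m * (c2 p ^ m)⁻¹ * b2 p * (c2 p)⁻¹ := by rw [ih]
      _ = a2 p * b2 p ^ m * ((c2 p ^ m)⁻¹ * b2 p) * (c2 p)⁻¹ := by group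
      _ = a2 p * b2 p ^ m * (b2 p * (c2 p ^ m)⁻¹) * (c2 p)⁻¹ := by rw [hc1.eq]
      _ = a2 p * (b2 p ^ m * b2 p) * ((c2 p ^ m)⁻¹ * (c2 p)⁻¹) := by group
      _ = a2 p * b2 p ^ (m+1) * (c2 p ^ (m+1))⁻¹ := by
            rw [pow_succ, pow_succ, mul_inv_rev]
            have : (c2 p ^ m)⁻¹ * (c2 p)⁻¹ = (c2 p)⁻¹ * (c2 p ^ m)⁻¹ :=
              ((c_central ((c2 p ^ m)⁻¹)).inv_left.eq).symm
            rw [this]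

lemma hba_pow (m n : ℕ) : b2 p ^ m * a2 p ^ n = a2 p ^ n * b2 p ^ m * (c2 p ^ (m * n))⁻¹ := by
  induction n with
  | zero => simp
  | succ n ih =>
    have hc3 : Commute ((c2 p ^ (m*n))⁻¹) (a2 p) := ((c_central (a2 p)).pow_left _).inv_left
    calc b2 p ^ m * a2 p ^ (n+1) = (b2 p ^ m * a2 p ^ n) * a2 p := by rw [pow_succ]; group
      _ = a2 p ^ n * b2 p ^ m * (c2 p ^ (m*n))⁻¹ * a2 p := by rw [ih]
      _ = a2 p ^ n * b2 p ^ m * ((c2 p ^ (m*n))⁻¹ * a2 p) := by group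
      _ = a2 p ^ n * b2 p ^ m * (a2 p * (c2 p ^ (m*n))⁻¹) := by rw [hc3.eq]
      _ = a2 p ^ n * ((b2 p ^ m * a2 p) * (c2 p ^ (m*n))⁻¹) := by group
      _ = a2 p ^ n * ((a2 p * b2 p ^ m * (c2 p ^ m)⁻¹) * (c2 p ^ (m*n))⁻¹) := by rw [hba_pow1]
      _ = (a2 p ^ n * a2 p) * b2 p ^ m * ((c2 p ^ m)⁻¹ * (c2 p ^ (m*n))⁻¹) := by group
      _ = a2 p ^ (n+1) * b2 p ^ m * (c2 p ^ (m*(n+1)))⁻¹ := by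
            rw [pow_succ, ← mul_inv_rev, ← pow_add, show m*n + m = m*(n+1) from by ring]

lemma c_pow_comm (n : ℕ) (g : G2 p) : c2 p ^ n * g = g * c2 p ^ n :=
  ((c_central g).pow_left n).eq

lemma c_pow_inv_comm (n : ℕ) (g : G2 p) : (c2 p ^ n)⁻¹ * g = g * (c2 p ^ n)⁻¹ :=
  (((c_central g).pow_left n).inv_left).eq

lemma pow_val_add {x : G2 p} (hx : x ^ p = 1) (m n : ZMod p) :
    x ^ (m.val + n.val) = pw x (m + n) := by
  rw [pow_eq_pw hx]
  push_cast [ZMod.natCast_rightInverse m, ZMod.natCast_rightInverse n]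
  rfl

lemma pow_val_mul {x : G2 p} (hx : x ^ p = 1) (m n : ZMod p) :
    x ^ (m.val * n.val) = pw x (m * n) := by
  rw [pow_eq_pw hx]
  push_cast [ZMod.natCast_rightInverse m, ZMod.natCast_rightInverse n]
  rfl

lemma nf_mul (i j l i' j' l' : ZMod p) :
    nf p i j l * nf p i' j' l' = nf p (i+i') (j+j') (l+l'-j*i') := by
  unfold nf pw
  set A := a2 p; set B := b2 p; set C := c2 p
  set x1 := i.val; set y1 := j.val; set z1 := l.val
  set x2 := i'.val; set y2 := j'.val; set z2 := l'.val
  calc A^x1 * B^y1 * C^z1 * (A^x2 * B^y2 * C^z2)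
      = A^x1 * B^y1 * (C^z1 * A^x2) * (B^y2 * C^z2) := by group
    _ = A^x1 * B^y1 * (A^x2 * C^z1) * (B^y2 * C^z2) := by rw [c_pow_comm]
    _ = A^x1 * (B^y1 * A^x2) * ((C^z1 * B^y2) * C^z2) := by group
    _ = A^x1 * (B^y1 * A^x2) * ((B^y2 * C^z1) * C^z2) := by rw [c_pow_comm]
    _ = A^x1 * (A^x2 * B^y1 * (C^(y1*x2))⁻¹) * ((B^y2 * C^z1) * C^z2) := by rw [hba_pow]
    _ = A^x1 * A^x2 * B^y1 * ((C^(y1*x2))⁻¹ * B^y2) * (C^z1 * C^z2) := by group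
    _ = A^x1 * A^x2 * B^y1 * (B^y2 * (C^(y1*x2))⁻¹) * (C^z1 * C^z2) := by
          rw [c_pow_inv_comm]
    _ = A^(x1+x2) * B^(y1+y2) * (C^(z1+z2) * (C^(y1*x2))⁻¹) := by
          rw [pow_add, pow_add, pow_add]; group
    _ = pw A (i+i') * pw B (j+j') * (pw C (l+l') * (pw C (j*i'))⁻¹) := by
          rw [pow_val_add ha_pow, pow_val_add hb_pow, pow_val_add hc_pow,
            pow_val_mul hc_pow]
    _ = pw A (i+i') * pw B (j+j') * pw C (l+l'-j*i') := by
          rw [pw_inv hc_pow, pw_add hc_pow, sub_eq_add_neg]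

lemma nf_one : nf p 0 0 0 = 1 := by
  simp [nf, pw_zero]

lemma nf_inv (i j l : ZMod p) : (nf p i j l)⁻¹ = nf p (-i) (-j) (-l - j*i) := by
  apply inv_eq_of_mul_eq_one_right
  rw [nf_mul]
  rw [show i + -i = 0 from by ring, show j + -j = 0 from by ring,
    show l + (-l - j*i) - j * -i = 0 from by ring, nf_one]

lemma nf_congr {i j l i' j' l' : ZMod p} (h1 : i = i') (h2 : j = j') (h3 : l = l') :
    nf p i j l = nf p i' j' l' := by rw [h1, h2, h3]

lemma two_mul_choose2 (n : ℕ) : 2 * n.choose 2 + n = n ^ 2 := by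
  induction n with
  | zero => rfl
  | succ n ih =>
    rw [Nat.choose_succ_succ, Nat.choose_one_right]
    ring_nf
    ring_nf at ih
    omega

lemma nf_pow (i j l : ZMod p) (n : ℕ) :
    (nf p i j l) ^ n = nf p (n*i) (n*j) (n*l - (n.choose 2 : ZMod p)*(j*i)) := by
  induction n with
  | zero => simp [nf_one]
  | succ n ih =>
    rw [pow_succ, ih, nf_mul]
    apply nf_congr
    · push_cast; ring
    · push_cast; ring
    · rw [Nat.choose_succ_succ, Nat.choose_one_right]
      push_cast; ring

lemma nf_pw (i j l m : ZMod p) :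
    pw (nf p i j l) m = nf p (i*m) (j*m) (l*m - ((m.val.choose 2 : ℕ) : ZMod p)*(j*i)) := by
  show (nf p i j l) ^ m.val = _
  rw [nf_pow]
  apply nf_congr <;> rw [ZMod.natCast_rightInverse m] <;> ring

lemma choose2_cast (m : ZMod p) :
    2 * ((m.val.choose 2 : ℕ) : ZMod p) = m ^ 2 - m := by
  have h := two_mul_choose2 m.val
  have h2 : ((2 * m.val.choose 2 + m.val : ℕ) : ZMod p) = ((m.val ^ 2 : ℕ) : ZMod p) := by
    exact_mod_cast congrArg _ h
  push_cast [ZMod.natCast_rightInverse m] at h2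
  linear_combination h2

lemma nf_b (h1p : 1 < p) : nf p 0 1 0 = b2 p := by
  simp [nf, pw_zero, pw_one' h1p]

lemma nf_a (h1p : 1 < p) : nf p 1 0 0 = a2 p := by
  simp [nf, pw_zero, pw_one' h1p]

lemma nf_c (m : ZMod p) : nf p 0 0 m = pw (c2 p) m := by
  simp [nf, pw_zero]

lemma theta_exists :
    ∃ θ : G2 p →* Multiplicative (ZMod p × ZMod p),
      ∀ i j l : ZMod p, θ (nf p i j l) = Multiplicative.ofAdd (i, j) := by
  set f : Fin 3 → Multiplicative (ZMod p × ZMod p) :=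
    ![Multiplicative.ofAdd ((1 : ZMod p), (0 : ZMod p)),
      Multiplicative.ofAdd ((0 : ZMod p), (1 : ZMod p)),
      Multiplicative.ofAdd ((0 : ZMod p), (0 : ZMod p))] with hf
  have hrel : ∀ r ∈ G2Rels p, FreeGroup.lift f r = 1 := by
    intro r hr
    have hcomm : ∀ x y : Multiplicative (ZMod p × ZMod p), ⁅x, y⁆ = 1 := fun x y =>
      commutatorElement_eq_one_iff_commute.mpr (mul_comm x y)
    have hpow : ∀ x y : ZMod p, Multiplicative.ofAdd (x, y) ^ p = 1 := by
      intro x y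
      have : (p : ℕ) • ((x, y) : ZMod p × ZMod p) = 0 := by
        simp [Prod.ext_iff, nsmul_eq_mul, ZMod.natCast_self]
      rw [← ofAdd_nsmul, this, ofAdd_zero]
    simp only [G2Rels, Set.mem_insert_iff, Set.mem_singleton_iff] at hr
    rcases hr with rfl | rfl | rfl | rfl | rfl | rfl
    · rw [map_pow, FreeGroup.lift_apply_of]; exact hpow _ _
    · rw [map_pow, FreeGroup.lift_apply_of]; exact hpow _ _
    · rw [map_pow, FreeGroup.lift_apply_of]; exact hpow _ _
    · rw [map_mul, map_inv, map_commutatorElement, hcomm, FreeGroup.lift_apply_of, one_mul, hf]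
      simp
    · rw [map_commutatorElement]; exact hcomm _ _
    · rw [map_commutatorElement]; exact hcomm _ _
  refine ⟨PresentedGroup.toGroup hrel, fun i j l => ?_⟩
  have h0 : PresentedGroup.toGroup hrel (a2 p) = Multiplicative.ofAdd ((1 : ZMod p), 0) :=
    PresentedGroup.toGroup.of hrel
  have h1 : PresentedGroup.toGroup hrel (b2 p) = Multiplicative.ofAdd ((0 : ZMod p), 1) :=
    PresentedGroup.toGroup.of hrel
  have h2 : PresentedGroup.toGroup hrel (c2 p) = Multiplicative.ofAdd ((0 : ZMod p), 0) :=
    PresentedGroup.toGroup.of hrel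
  rw [nf, pw, pw, pw, map_mul, map_mul, map_pow, map_pow, map_pow, h0, h1, h2,
    ← ofAdd_nsmul, ← ofAdd_nsmul, ← ofAdd_nsmul, ← ofAdd_add, ← ofAdd_add]
  congr 1
  simp [Prod.ext_iff, nsmul_eq_mul, ZMod.natCast_rightInverse i, ZMod.natCast_rightInverse j]

lemma phi_exists (hp : p.Prime) (h2p : 2 < p) (L k : ZMod p) (hL2 : L^2 = -1) :
    ∃ φ : G2 p →* G2 p,
      φ (a2 p) = b2 p ∧
      φ (b2 p) = nf p L (L-1) k ∧
      φ (c2 p) = pw (c2 p) (-L) ∧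
      (∀ m, φ (pw (c2 p) m) = pw (c2 p) (-L * m)) ∧
      φ (nf p L (L-1) k) = nf p (-L-1) (-L) (1-k) ∧
      φ (nf p (-L-1) (-L) (1-k)) = a2 p := by
  have h1p : 1 < p := hp.one_lt
  haveI : Fact p.Prime := ⟨hp⟩
  have h2ne : (2 : ZMod p) ≠ 0 := by
    have hnd : ¬ (p ∣ 2) := fun h => absurd (Nat.le_of_dvd two_pos h) (by omega)
    intro h
    have h' : ((2 : ℕ) : ZMod p) = 0 := by exact_mod_cast h
    exact hnd ((ZMod.natCast_eq_zero_iff 2 p).mp h')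
  set f : Fin 3 → G2 p := ![b2 p, nf p L (L-1) k, pw (c2 p) (-L)] with hf
  have hchoosep : ((p.choose 2 : ℕ) : ZMod p) = 0 :=
    (ZMod.natCast_eq_zero_iff _ _).mpr
      (Nat.Prime.dvd_choose_self hp (by norm_num) h2p)
  have hx3pow : (nf p L (L-1) k) ^ p = 1 := by
    rw [nf_pow, hchoosep, ZMod.natCast_self]
    simpa using nf_one
  have hcpowL : (pw (c2 p) (-L)) ^ p = 1 := by
    show ((c2 p) ^ (-L).val) ^ p = 1
    rw [← pow_mul, mul_comm, pow_mul, hc_pow, one_pow]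
  have hcommBx3 : ⁅b2 p, nf p L (L-1) k⁆ = pw (c2 p) (-L) := by
    rw [commutatorElement_def, ← nf_b h1p, nf_inv, nf_inv, nf_mul, nf_mul, nf_mul, ← nf_c]
    apply nf_congr
    · ring
    · ring
    · ring
  have hrel : ∀ r ∈ G2Rels p, FreeGroup.lift f r = 1 := by
    intro r hr
    simp only [G2Rels, Set.mem_insert_iff, Set.mem_singleton_iff] at hr
    rcases hr with rfl | rfl | rfl | rfl | rfl | rfl
    · rw [map_pow, FreeGroup.lift_apply_of]; exact hb_pow
    · rw [map_pow, FreeGroup.lift_apply_of]; exact hx3pow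
    · rw [map_pow, FreeGroup.lift_apply_of]; exact hcpowL
    · rw [map_mul, map_inv, map_commutatorElement, FreeGroup.lift_apply_of, FreeGroup.lift_apply_of,
        FreeGroup.lift_apply_of]
      show ⁅b2 p, nf p L (L-1) k⁆ * (pw (c2 p) (-L))⁻¹ = 1
      rw [hcommBx3, mul_inv_cancel]
    · rw [map_commutatorElement, FreeGroup.lift_apply_of, FreeGroup.lift_apply_of]
      show ⁅b2 p, pw (c2 p) (-L)⁆ = 1
      exact commutatorElement_eq_one_iff_commute.mpr ((c_central (b2 p)).pow_left _).symm
    · rw [map_commutatorElement, FreeGroup.lift_apply_of, FreeGroup.lift_apply_of]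
      show ⁅nf p L (L-1) k, pw (c2 p) (-L)⁆ = 1
      exact commutatorElement_eq_one_iff_commute.mpr
        ((c_central (nf p L (L-1) k)).pow_left _).symm
  set φ := PresentedGroup.toGroup hrel with hφ
  have hA : φ (a2 p) = b2 p := PresentedGroup.toGroup.of hrel
  have hB : φ (b2 p) = nf p L (L-1) k := PresentedGroup.toGroup.of hrel
  have hC : φ (c2 p) = pw (c2 p) (-L) := PresentedGroup.toGroup.of hrel
  have hpwmap : ∀ (x : G2 p) (m : ZMod p), φ (pw x m) = pw (φ x) m := fun x m => map_pow φ x m.val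
  have hCm : ∀ m : ZMod p, φ (pw (c2 p) m) = pw (c2 p) (-L * m) := by
    intro m
    rw [hpwmap, hC, pw_pw hc_pow]
  have hnf : ∀ i j l : ZMod p, φ (nf p i j l) =
      nf p 0 i 0 * pw (nf p L (L-1) k) j * pw (c2 p) (-L * l) := by
    intro i j l
    rw [nf, map_mul, map_mul, hpwmap, hpwmap, hA, hB, hCm]
    congr 1
    congr 1
    simp [nf, pw_zero]
  have hch1 := choose2_cast (p := p) (L - 1)
  have hch2 := choose2_cast (p := p) (-L)
  have hx3 : φ (nf p L (L-1) k) = nf p (-L-1) (-L) (1-k) := by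
    rw [hnf, nf_pw, ← nf_c (-L * k), nf_mul, nf_mul]
    apply nf_congr
    · linear_combination hL2
    · linear_combination hL2
    · apply mul_left_cancel₀ h2ne
      linear_combination (-(L^2-L)) * hch1 + (-L^2+2*L-2) * hL2
  have hx4 : φ (nf p (-L-1) (-L) (1-k)) = a2 p := by
    rw [hnf, nf_pw, ← nf_c (-L * (1-k)), nf_mul, nf_mul, ← nf_a h1p]
    apply nf_congr
    · linear_combination -hL2
    · linear_combination -hL2
    · apply mul_left_cancel₀ h2ne
      linear_combination (-(L^2-L)) * hch2 + (-L^2-2*L) * hL2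
  exact ⟨φ, hA, hB, hC, hCm, hx3, hx4⟩

end AuxStatement9

/-- The assignment `a ↦ b`, `b ↦ a^λ b^(λ-1) c^k`, `c ↦ c^(-λ)` extends
to an automorphism `α` of `G₂(p)` of order 4 permuting the four elements of `R_{4,k}`
cyclically. -/
theorem statement9 (p : ℕ) (hp : p.Prime) (hdvd : 4 ∣ p - 1)
    (lam : (ZMod p)ˣ) (hlam : orderOf lam = 4) (k : ZMod p) :
    ∃ α : MulAut (G2 p),
      orderOf α = 4 ∧
      α (a2 p) = b2 p ∧
      α (b2 p) = pw (a2 p) (lam : ZMod p) * pw (b2 p) ((lam : ZMod p) - 1) * pw (c2 p) k ∧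
      α (c2 p) = pw (c2 p) (-(lam : ZMod p)) ∧
      α (pw (a2 p) (lam : ZMod p) * pw (b2 p) ((lam : ZMod p) - 1) * pw (c2 p) k) =
        pw (a2 p) (-(lam : ZMod p) - 1) * pw (b2 p) (-(lam : ZMod p)) * pw (c2 p) (1 - k) ∧
      α (pw (a2 p) (-(lam : ZMod p) - 1) * pw (b2 p) (-(lam : ZMod p)) * pw (c2 p) (1 - k)) =
        a2 p := by
  haveI : Fact p.Prime := ⟨hp⟩
  haveI : NeZero p := ⟨hp.pos.ne'⟩
  have h1p : 1 < p := hp.one_lt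
  have h2p : 2 < p := by
    have h4 : 4 ≤ p - 1 := Nat.le_of_dvd (by omega) hdvd
    omega
  set L : ZMod p := (lam : ZMod p) with hLdef
  have hlam2 : lam ^ 2 ≠ 1 := by
    intro h
    have h' := orderOf_dvd_of_pow_eq_one h
    rw [hlam] at h'
    norm_num at h'
  have hlam4 : lam ^ 4 = 1 := by rw [← hlam]; exact pow_orderOf_eq_one lam
  have hL2 : L ^ 2 = -1 := by
    have h1 : (L ^ 2) * (L ^ 2) = 1 := by
      have h' : ((lam ^ 4 : (ZMod p)ˣ) : ZMod p) = 1 := by rw [hlam4]; rfl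
      push_cast at h'
      linear_combination h'
    rcases mul_self_eq_one_iff.mp h1 with h | h
    · exact absurd (Units.ext (by push_cast; exact h)) hlam2
    · exact h
  have hL1 : L ≠ 1 := by
    intro h
    have : lam = 1 := Units.ext (by rw [← hLdef, h]; rfl)
    rw [this] at hlam
    simp at hlam
  obtain ⟨φ, hA, hB, hC, hCm, hx3, hx4⟩ := phi_exists hp h2p L k hL2
  have h4 : ∀ x, φ (φ (φ (φ x))) = x := by
    have heq : (φ.comp (φ.comp (φ.comp φ))) = MonoidHom.id (G2 p) := by
      apply PresentedGroup.ext
      intro x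
      fin_cases x
      · show φ (φ (φ (φ (a2 p)))) = a2 p
        rw [hA, hB, hx3, hx4]
      · show φ (φ (φ (φ (b2 p)))) = b2 p
        rw [hB, hx3, hx4, hA]
      · show φ (φ (φ (φ (c2 p)))) = c2 p
        rw [hC, hCm, hCm, hCm,
          show -L * (-L * (-L * -L)) = (1 : ZMod p) from by
            linear_combination (L^2 - 1) * hL2,
          pw_one' h1p]
    intro x
    exact DFunLike.congr_fun heq x
  set α : MulAut (G2 p) :=
    { toFun := φ, invFun := fun x => φ (φ (φ x)),
      left_inv := fun x => h4 x, right_inv := fun x => h4 x,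
      map_mul' := map_mul φ } with hα
  have hαapp : ∀ x, α x = φ x := fun _ => rfl
  have hα4 : α ^ 4 = 1 := by
    have hsq : (α * α) * (α * α) = 1 := by
      ext x
      show φ (φ (φ (φ x))) = x
      exact h4 x
    rw [show (4:ℕ) = 2 * 2 from by norm_num, pow_mul, pow_two, pow_two]
    exact hsq
  have hα2 : ¬ α ^ 2 ^ 1 = 1 := by
    intro h
    have e1 : (α ^ 2 ^ 1) (a2 p) = a2 p := by rw [h]; rfl
    have e2 : (α ^ 2 ^ 1) (a2 p) = nf p L (L-1) k := by
      have e : α ^ 2 ^ 1 = α * α := by rw [pow_one, pow_two]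
      rw [e]
      show φ (φ (a2 p)) = _
      rw [hA, hB]
    obtain ⟨θ, hθ⟩ := theta_exists (p := p)
    have e3 : nf p L (L-1) k = nf p 1 0 0 := by
      rw [nf_a h1p, ← e2, e1]
    have e4 := congrArg θ e3
    rw [hθ, hθ] at e4
    have e5 : (L, L-1) = ((1 : ZMod p), (0 : ZMod p)) := by
      simpa using e4
    exact hL1 (by simpa using congrArg Prod.fst e5)
  refine ⟨α, ?_, ?_, ?_, ?_, ?_, ?_⟩
  · have h := orderOf_eq_prime_pow (x := α) (p := 2) (n := 1) hα2 (by norm_num [hα4])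
    simpa using h
  · exact hA
  · exact hB
  · exact hC
  · exact hx3
  · exact hx4
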